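/- arXiv:1410.4109 — 2 statements merged into one kernel-verified Lean document; each statement's English description precedes it below -/
import Mathlib

section
/- If w is a flattened permutation of length n with occ(w) = r for some integer r ≥ 1, then n ≥ 1 + 2√r. -/
open Finset Polynomial

/-- The cycle of `π` starting at `m`: `m, π m, π² m, …` through one full period. -/
noncomputable def cycleList {n : ℕ} (π : Equiv.Perm (Fin n)) (m : Fin n) : List (Fin n) :=
  (List.range (Function.minimalPeriod π m)).map (fun k => (π ^ k) m)

/-- The minima of the cycles of `π`, listed in increasing order. -/
def cycleMins {n : ℕ} (π : Equiv.Perm (Fin n)) : List (Fin n) :=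
  (Finset.univ.filter (fun m : Fin n => ∀ k < n, m ≤ (π ^ k) m)).sort (· ≤ ·)

/-- The flattened permutation of `π`, as a word on the letters `1, …, n`:
erase the parentheses from the standard cycle form of `π`. -/
noncomputable def flattenPerm {n : ℕ} (π : Equiv.Perm (Fin n)) : List ℕ :=
  ((cycleMins π).map (cycleList π)).flatten.map (fun m => (m : ℕ) + 1)

/-- The number of occurrences of the pattern 13-2 in the word `w = w₁w₂⋯wₙ`
(1-based), i.e. the number of pairs `(i,j)` with `2 ≤ i < j ≤ n` and
`w_{i-1} < w_j < w_i`.  Below, `p.1` and `p.2` are the 0-based versions of `i` and `j`. -/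
def occ (w : List ℕ) : ℕ :=
  ((Finset.range w.length ×ˢ Finset.range w.length).filter
    (fun p : ℕ × ℕ => 1 ≤ p.1 ∧ p.1 < p.2 ∧
      w.getD (p.1 - 1) 0 < w.getD p.2 0 ∧ w.getD p.2 0 < w.getD p.1 0)).card

/-- `g_n = Σ_{π ∈ S_n} q^{occ(Flatten(π))} ∈ ℤ[q]`. -/
noncomputable def gPoly (n : ℕ) : Polynomial ℤ :=
  ∑ π : Equiv.Perm (Fin n), X ^ occ (flattenPerm π)

/-- `g_n(a₁⋯a_k)`: the sum of `q^{occ(Flatten(π))}` over the permutations `π` of length `n`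
whose flattened permutation starts with the subword `a₁⋯a_k`. -/
noncomputable def gPrefix (n : ℕ) (w : List ℕ) : Polynomial ℤ :=
  ∑ π ∈ Finset.univ.filter (fun π : Equiv.Perm (Fin n) => w <+: flattenPerm π),
    X ^ occ (flattenPerm π)

/-- `g_{n,r}(a₁⋯a_k)`: the number of permutations `π` of length `n` such that `Flatten(π)`
starts with `a₁⋯a_k` and has exactly `r` occurrences of the pattern 13-2. -/
noncomputable def gCount (n r : ℕ) (w : List ℕ) : ℕ :=
  (Finset.univ.filter (fun π : Equiv.Perm (Fin n) =>
    w <+: flattenPerm π ∧ occ (flattenPerm π) = r)).card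


lemma sum_halves (L : ℕ) : ∑ j ∈ Finset.range L, j / 2 = (L-1)*(L-1)/4 := by
  induction L with
  | zero => simp
  | succ L ih =>
    rw [Finset.sum_range_succ, ih]
    have step : ∀ m : ℕ, (m-1)*(m-1)/4 + m/2 = m*m/4 := by
      intro m
      rcases Nat.even_or_odd m with ⟨k,hk⟩|⟨k,hk⟩
      · rcases k with _|k
        · simp [hk]
        · have h1 : m - 1 = 2*k+1 := by omega
          have h2 : m = 2*k+2 := by omega
          rw [h1, h2]
          have e1 : (2*k+1)*(2*k+1) = 4*(k*k)+4*k+1 := by ring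
          have e2 : (2*k+2)*(2*k+2) = 4*(k*k)+8*k+4 := by ring
          rw [e1, e2]
          generalize k*k = e
          omega
      · have h1 : m - 1 = 2*k := by omega
        rw [h1, hk]
        have e1 : (2*k)*(2*k) = 4*(k*k) := by ring
        have e2 : (2*k+1)*(2*k+1) = 4*(k*k)+4*k+1 := by ring
        rw [e1, e2]
        generalize k*k = e
        omega
    simpa using step L

lemma occ_le_quarter (w : List ℕ) : occ w ≤ (w.length - 1) * (w.length - 1) / 4 := by
  set L := w.length with hL
  set S := ((Finset.range L ×ˢ Finset.range L).filter
    (fun p : ℕ × ℕ => 1 ≤ p.1 ∧ p.1 < p.2 ∧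
      w.getD (p.1 - 1) 0 < w.getD p.2 0 ∧ w.getD p.2 0 < w.getD p.1 0)) with hS
  have hocc : occ w = S.card := rfl
  have hfib : S.card = ∑ j ∈ Finset.range L, (S.filter (fun p => p.2 = j)).card := by
    apply Finset.card_eq_sum_card_fiberwise (f := Prod.snd)
    intro p hp
    rw [hS, Finset.mem_coe, Finset.mem_filter, Finset.mem_product] at hp
    exact hp.1.2
  have hbound : ∀ j ∈ Finset.range L, (S.filter (fun p => p.2 = j)).card ≤ j / 2 := by
    intro j _
    have : (S.filter (fun p => p.2 = j)).card ≤ (Finset.range (j/2)).card := by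
      apply Finset.card_le_card_of_injOn (fun p : ℕ × ℕ => (p.1 - 1) / 2)
      · intro p hp
        rw [Finset.mem_coe, Finset.mem_filter, hS, Finset.mem_filter] at hp
        obtain ⟨⟨-, h1, h2, -⟩, h5⟩ := hp
        exact Finset.mem_range.2 (by show (p.1 - 1) / 2 < j / 2; omega)
      · intro p hp q hq heq
        simp only [Finset.coe_filter, Set.mem_setOf_eq, hS, Finset.mem_filter] at hp hq
        obtain ⟨⟨-, hp1, hp2, hp3, hp4⟩, hp5⟩ := hp
        obtain ⟨⟨-, hq1, hq2, hq3, hq4⟩, hq5⟩ := hq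
        simp only at heq
        have hcases : q.1 = p.1 + 1 ∨ p.1 = q.1 + 1 ∨ p.1 = q.1 := by omega
        rcases hcases with h | h | h
        · exfalso
          rw [hq5, ← hp5] at hq3 hq4
          rw [show q.1 - 1 = p.1 by omega] at hq3
          exact absurd hq3 (not_lt.2 hp4.le)
        · exfalso
          rw [hp5, ← hq5] at hp3 hp4
          rw [show p.1 - 1 = q.1 by omega] at hp3
          exact absurd hp3 (not_lt.2 hq4.le)
        · exact Prod.ext h (hp5.trans hq5.symm)
    simpa using this
  calc occ w = ∑ j ∈ Finset.range L, (S.filter (fun p => p.2 = j)).card := by rw [hocc, hfib]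
    _ ≤ ∑ j ∈ Finset.range L, j / 2 := Finset.sum_le_sum hbound
    _ = (L-1)*(L-1)/4 := sum_halves L

lemma cycleList_nodup {n : ℕ} (π : Equiv.Perm (Fin n)) (m : Fin n) :
    (cycleList π m).Nodup := by
  unfold cycleList
  refine List.Nodup.map_on ?_ List.nodup_range
  intro a ha b hb hab
  refine Function.iterate_injOn_Iio_minimalPeriod (f := ⇑π) (x := m)
    (List.mem_range.1 ha) (List.mem_range.1 hb) ?_
  simpa [← Equiv.Perm.coe_pow] using hab

lemma minimalPeriod_pos {n : ℕ} (π : Equiv.Perm (Fin n)) (m : Fin n) :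
    0 < Function.minimalPeriod (⇑π) m := by
  apply Function.IsPeriodicPt.minimalPeriod_pos (orderOf_pos π)
  show (⇑π)^[orderOf π] m = m
  rw [← Equiv.Perm.coe_pow, pow_orderOf_eq_one]
  rfl

lemma minimalPeriod_le {n : ℕ} (π : Equiv.Perm (Fin n)) (m : Fin n) :
    Function.minimalPeriod (⇑π) m ≤ n := by
  have h := (cycleList_nodup π m).length_le_card
  simpa [cycleList] using h

lemma min_le_pow {n : ℕ} (π : Equiv.Perm (Fin n)) (m : Fin n)
    (hm : ∀ k < n, m ≤ (π ^ k) m) (c : ℕ) : m ≤ (π ^ c) m := by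
  have h1 : (π ^ (c % Function.minimalPeriod (⇑π) m)) m = (π ^ c) m := by
    have h := Function.iterate_mod_minimalPeriod_eq (f := ⇑π) (x := m) (n := c)
    rw [← Equiv.Perm.coe_pow, ← Equiv.Perm.coe_pow] at h
    exact h
  calc m ≤ (π ^ (c % Function.minimalPeriod (⇑π) m)) m :=
        hm _ (lt_of_lt_of_le (Nat.mod_lt c (minimalPeriod_pos π m)) (minimalPeriod_le π m))
    _ = (π ^ c) m := h1

lemma pow_inv_eq {n : ℕ} (π : Equiv.Perm (Fin n)) (l : ℕ) :
    (π ^ l)⁻¹ = π ^ ((orderOf π - 1) * l) := by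
  have h1 : π ^ (orderOf π - 1) = π⁻¹ := by
    apply eq_inv_of_mul_eq_one_left
    rw [← pow_succ, Nat.sub_add_cancel (orderOf_pos π), pow_orderOf_eq_one]
  rw [pow_mul, h1, inv_pow]

lemma flatten_nodup {n : ℕ} (π : Equiv.Perm (Fin n)) :
    (((cycleMins π).map (cycleList π)).flatten).Nodup := by
  rw [List.nodup_flatten]
  constructor
  · intro l hl
    obtain ⟨m, -, rfl⟩ := List.mem_map.1 hl
    exact cycleList_nodup π m
  · rw [List.pairwise_map]
    have hnd : (cycleMins π).Nodup := Finset.sort_nodup _ _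
    refine List.Pairwise.imp_of_mem ?_ hnd
    intro m m' hmem hmem' hne
    have hmin : ∀ k < n, m ≤ (π ^ k) m := by
      have := Finset.mem_sort (α := Fin n) (· ≤ ·) |>.1 hmem
      exact (Finset.mem_filter.1 this).2
    have hmin' : ∀ k < n, m' ≤ (π ^ k) m' := by
      have := Finset.mem_sort (α := Fin n) (· ≤ ·) |>.1 hmem'
      exact (Finset.mem_filter.1 this).2
    intro x hx hx'
    obtain ⟨k, -, hk⟩ := by simpa [cycleList] using hx
    obtain ⟨l, -, hl⟩ := by simpa [cycleList] using hx'
    -- x = π^k m = π^l m'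
    apply hne
    have hm'm : m' = (π ^ ((orderOf π - 1) * l + k)) m := by
      rw [pow_add, Equiv.Perm.mul_apply, hk, ← hl, ← pow_inv_eq, Equiv.Perm.coe_inv, Equiv.symm_apply_apply]
    have hmm' : m = (π ^ ((orderOf π - 1) * k + l)) m' := by
      rw [pow_add, Equiv.Perm.mul_apply, hl, ← hk, ← pow_inv_eq, Equiv.Perm.coe_inv, Equiv.symm_apply_apply]
    have h1 : m ≤ m' := by rw [hm'm]; exact min_le_pow π m hmin _
    have h2 : m' ≤ m := by rw [hmm']; exact min_le_pow π m' hmin' _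
    exact le_antisymm h1 h2

lemma flattenPerm_length_le {n : ℕ} (π : Equiv.Perm (Fin n)) :
    (((cycleMins π).map (cycleList π)).flatten).length ≤ n := by
  have := (flatten_nodup π).length_le_card
  simpa using this


/-- If a flattened permutation of length `n` has `r ≥ 1` occurrences of the
pattern 13-2, then `n ≥ 1 + 2√r`. -/
theorem length_lower_bound (n r : ℕ) (π : Equiv.Perm (Fin n)) (hr : 1 ≤ r)
    (hocc : occ (flattenPerm π) = r) :
    (1 : ℝ) + 2 * Real.sqrt r ≤ (n : ℝ) := by
  have hlen : (flattenPerm π).length ≤ n := by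
    have heq : (flattenPerm π).length = (((cycleMins π).map (cycleList π)).flatten).length := by
      unfold flattenPerm
      rw [List.length_map]
      generalize (((cycleMins π).map (cycleList π)).flatten) = l
      induction l with
      | nil => rfl
      | cons a l ih => simpa using ih
    rw [heq]
    exact flattenPerm_length_le π
  have h1 : r ≤ ((flattenPerm π).length - 1) * ((flattenPerm π).length - 1) / 4 := by
    rw [← hocc]; exact occ_le_quarter _
  have h2 : r ≤ (n - 1) * (n - 1) / 4 :=
    le_trans h1 (Nat.div_le_div_right
      (Nat.mul_le_mul (Nat.sub_le_sub_right hlen 1) (Nat.sub_le_sub_right hlen 1)))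
  have h3 : 4 * r ≤ (n - 1) * (n - 1) := by
    have := (Nat.le_div_iff_mul_le (by norm_num : 0 < 4)).1 h2
    omega
  have hn : 1 ≤ n := by
    rcases Nat.eq_zero_or_pos n with h | h
    · subst h; simp at h3; omega
    · exact h
  have hcast : (4 : ℝ) * r ≤ ((n : ℝ) - 1) ^ 2 := by
    calc (4 : ℝ) * r = ((4 * r : ℕ) : ℝ) := by push_cast; ring
      _ ≤ (((n - 1) * (n - 1) : ℕ) : ℝ) := by exact_mod_cast h3
      _ = ((n : ℝ) - 1) ^ 2 := by
          push_cast [Nat.cast_sub hn]; ring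
  have hnn : (0 : ℝ) ≤ (n : ℝ) - 1 := by
    have : (1 : ℝ) ≤ (n : ℝ) := by exact_mod_cast hn
    linarith
  have hs : Real.sqrt (4 * r) ≤ (n : ℝ) - 1 := by
    rw [show ((n : ℝ) - 1) = Real.sqrt (((n : ℝ) - 1) ^ 2) from (Real.sqrt_sq hnn).symm]
    exact Real.sqrt_le_sqrt hcast
  have h4 : Real.sqrt ((4 : ℝ) * r) = 2 * Real.sqrt r := by
    rw [show (4 : ℝ) = 2 ^ 2 by norm_num, Real.sqrt_mul (by positivity) (r : ℝ),
      Real.sqrt_sq (by norm_num : (0:ℝ) ≤ 2)]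
  rw [h4] at hs
  linarith
end

section
/- For all integers n ≥ 2, r ≥ 1 and k ≥ 2, the number g_{n,r}(1k) is even. -/
open Finset Polynomial

namespace FlatAux

open Equiv Equiv.Perm Function

variable {n : ℕ}

/-- the minima set -/
def minsSet (π : Equiv.Perm (Fin n)) : Finset (Fin n) :=
  Finset.univ.filter (fun m : Fin n => ∀ k < n, m ≤ (π ^ k) m)

lemma cycleMins_def (π : Equiv.Perm (Fin n)) : cycleMins π = (minsSet π).sort (· ≤ ·) := rfl

/-- flatten over Fin n -/
noncomputable def Fl (π : Equiv.Perm (Fin n)) : List (Fin n) :=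
  ((cycleMins π).map (cycleList π)).flatten

lemma flattenPerm_eq (π : Equiv.Perm (Fin n)) :
    flattenPerm π = (Fl π).map (fun m => (m : ℕ) + 1) := rfl

lemma pow_period (σ : Equiv.Perm (Fin n)) (m : Fin n) :
    (σ ^ Function.minimalPeriod ⇑σ m) m = m := by
  exact Function.isPeriodicPt_minimalPeriod ⇑σ m

lemma T_pos (σ : Equiv.Perm (Fin n)) (m : Fin n) : 0 < Function.minimalPeriod ⇑σ m := by
  have h1 : Function.IsPeriodicPt ⇑σ (orderOf σ) m := by
    have : σ ^ orderOf σ = 1 := pow_orderOf_eq_one σ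
    simp [Function.IsPeriodicPt, Function.IsFixedPt, ← Equiv.Perm.coe_pow, this]
  exact h1.minimalPeriod_pos (orderOf_pos σ)

lemma pow_mod (σ : Equiv.Perm (Fin n)) (m : Fin n) (k : ℕ) :
    (σ ^ (k % Function.minimalPeriod ⇑σ m)) m = (σ ^ k) m := by
  exact Function.iterate_mod_minimalPeriod_eq

lemma pow_apply_inj {σ : Equiv.Perm (Fin n)} {m : Fin n} {i j : ℕ}
    (hi : i < Function.minimalPeriod ⇑σ m) (hj : j < Function.minimalPeriod ⇑σ m)
    (h : (σ ^ i) m = (σ ^ j) m) : i = j := by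
  refine Function.iterate_injOn_Iio_minimalPeriod (f := ⇑σ) (x := m)
    (Set.mem_Iio.2 hi) (Set.mem_Iio.2 hj) ?_
  simpa [← Equiv.Perm.coe_pow] using h

lemma T_le (σ : Equiv.Perm (Fin n)) (m : Fin n) : Function.minimalPeriod ⇑σ m ≤ n := by
  classical
  have hinj : Set.InjOn (fun k => (σ ^ k) m)
      ↑(Finset.range (Function.minimalPeriod ⇑σ m)) := by
    intro i hi j hj h
    simp only [Finset.coe_range, Set.mem_Iio] at hi hj
    exact pow_apply_inj hi hj h
  calc Function.minimalPeriod ⇑σ m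
      = (Finset.range (Function.minimalPeriod ⇑σ m)).card := by simp
    _ = ((Finset.range (Function.minimalPeriod ⇑σ m)).image (fun k => (σ ^ k) m)).card :=
        (Finset.card_image_of_injOn hinj).symm
    _ ≤ Fintype.card (Fin n) := Finset.card_le_univ _
    _ = n := Fintype.card_fin n

lemma sameCycle_of_pow {σ : Equiv.Perm (Fin n)} {m x : Fin n} {k : ℕ} (h : (σ ^ k) m = x) :
    σ.SameCycle m x := ⟨(k : ℤ), by simpa [zpow_natCast] using h⟩

lemma exists_pow_lt_period {σ : Equiv.Perm (Fin n)} {m x : Fin n} (h : σ.SameCycle m x) :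
    ∃ j < Function.minimalPeriod ⇑σ m, (σ ^ j) m = x := by
  obtain ⟨i, -, rfl⟩ := h.exists_pow_eq'
  exact ⟨i % _, Nat.mod_lt _ (T_pos σ m), pow_mod σ m i⟩

lemma mem_cycleList {σ : Equiv.Perm (Fin n)} {m x : Fin n} :
    x ∈ cycleList σ m ↔ σ.SameCycle m x := by
  simp only [cycleList, List.mem_map, List.mem_range]
  constructor
  · rintro ⟨k, -, rfl⟩; exact sameCycle_of_pow rfl
  · intro h
    obtain ⟨j, hj, hjx⟩ := exists_pow_lt_period h
    exact ⟨j, hj, hjx⟩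

lemma cycleList_nodup (σ : Equiv.Perm (Fin n)) (m : Fin n) : (cycleList σ m).Nodup := by
  refine (List.nodup_range).map_on ?_
  intro i hi j hj h
  exact pow_apply_inj (List.mem_range.1 hi) (List.mem_range.1 hj) h

lemma cycleList_eq_append (σ : Equiv.Perm (Fin n)) (m : Fin n) :
    cycleList σ m =
      ((List.range (Function.minimalPeriod ⇑σ m - 1)).map fun k => (σ ^ k) m)
        ++ [(σ ^ (Function.minimalPeriod ⇑σ m - 1)) m] := by
  have hT := T_pos σ m
  conv_lhs => rw [cycleList,
    show Function.minimalPeriod ⇑σ m = (Function.minimalPeriod ⇑σ m - 1) + 1 by omega]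
  rw [List.range_succ, List.map_append]
  simp

lemma mem_minsSet {σ : Equiv.Perm (Fin n)} {m : Fin n} :
    m ∈ minsSet σ ↔ ∀ k : ℕ, m ≤ (σ ^ k) m := by
  simp only [minsSet, Finset.mem_filter, Finset.mem_univ, true_and]
  constructor
  · intro h k
    rw [← pow_mod]
    exact h _ (lt_of_lt_of_le (Nat.mod_lt _ (T_pos σ m)) (T_le σ m))
  · exact fun h k _ => h k

lemma mem_minsSet_iff_cycle {σ : Equiv.Perm (Fin n)} {m : Fin n} :
    m ∈ minsSet σ ↔ ∀ x, σ.SameCycle m x → m ≤ x := by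
  rw [mem_minsSet]
  constructor
  · intro h x hx
    obtain ⟨j, -, rfl⟩ := exists_pow_lt_period hx
    exact h j
  · intro h k
    exact h _ (sameCycle_of_pow rfl)

lemma minsSet_eq_of_sameCycle {σ : Equiv.Perm (Fin n)} {m m' : Fin n}
    (h : m ∈ minsSet σ) (h' : m' ∈ minsSet σ) (hc : σ.SameCycle m m') : m = m' :=
  le_antisymm (mem_minsSet_iff_cycle.1 h m' hc) (mem_minsSet_iff_cycle.1 h' m hc.symm)

lemma exists_min (σ : Equiv.Perm (Fin n)) (x : Fin n) :
    ∃ m ∈ minsSet σ, σ.SameCycle m x := by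
  classical
  set C : Finset (Fin n) := (Finset.range n).image (fun k => (σ ^ k) x) with hC
  have hnlt : 0 < n := x.pos
  have hx0 : x ∈ C := Finset.mem_image.2 ⟨0, Finset.mem_range.2 hnlt, by simp⟩
  have key : ∀ y, σ.SameCycle x y → y ∈ C := by
    intro y hy
    obtain ⟨i, hi, rfl⟩ := exists_pow_lt_period hy
    exact Finset.mem_image.2 ⟨i, Finset.mem_range.2 (lt_of_lt_of_le hi (T_le σ x)), rfl⟩
  have hCne : C.Nonempty := ⟨x, hx0⟩
  obtain ⟨k, -, hk⟩ := Finset.mem_image.1 (C.min'_mem hCne)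
  have hcyc : σ.SameCycle (C.min' hCne) x := (sameCycle_of_pow hk).symm
  refine ⟨C.min' hCne, mem_minsSet_iff_cycle.2 ?_, hcyc⟩
  intro y hy
  exact C.min'_le y (key y (hcyc.symm.trans hy))

lemma mem_Fl (σ : Equiv.Perm (Fin n)) (x : Fin n) : x ∈ Fl σ := by
  obtain ⟨m, hm, hc⟩ := exists_min σ x
  refine List.mem_flatten.2 ⟨cycleList σ m, List.mem_map.2 ⟨m, ?_, rfl⟩, mem_cycleList.2 hc⟩
  rw [cycleMins_def]
  exact (Finset.mem_sort _).2 hm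

lemma Fl_nodup (σ : Equiv.Perm (Fin n)) : (Fl σ).Nodup := by
  rw [Fl, List.nodup_flatten]
  constructor
  · rintro l hl
    obtain ⟨m, -, rfl⟩ := List.mem_map.1 hl
    exact cycleList_nodup σ m
  · rw [List.pairwise_map]
    have hnd : (cycleMins σ).Pairwise (· ≠ ·) := by
      rw [cycleMins_def]; exact (Finset.sort_nodup _ _)
    refine hnd.imp_of_mem ?_
    intro a b ha hb hne
    rw [cycleMins_def, Finset.mem_sort] at ha hb
    intro x hxa hxb
    rw [mem_cycleList] at hxa hxb
    exact hne (minsSet_eq_of_sameCycle ha hb (hxa.trans hxb.symm))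

lemma Fl_length (σ : Equiv.Perm (Fin n)) : (Fl σ).length = n := by
  classical
  have h1 : (Fl σ).toFinset = Finset.univ :=
    Finset.eq_univ_of_forall (fun x => List.mem_toFinset.2 (mem_Fl σ x))
  calc (Fl σ).length = (Fl σ).toFinset.card := (List.toFinset_card_of_nodup (Fl_nodup σ)).symm
    _ = (Finset.univ : Finset (Fin n)).card := by rw [h1]
    _ = n := by simp


lemma pow_apply_eq_self {σ : Equiv.Perm (Fin n)} {x : Fin n} (h : σ x = x) (k : ℕ) :
    (σ ^ k) x = x := by
  induction k with
  | zero => simp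
  | succ k ih => rw [pow_succ', Equiv.Perm.mul_apply, ih, h]

lemma avoid {σ : Equiv.Perm (Fin n)} {x c : Fin n} (h : ¬ σ.SameCycle x c) (j : ℕ) :
    (σ ^ j) x ≠ c := fun he => h (sameCycle_of_pow he)

lemma sameCycle_fixed {σ : Equiv.Perm (Fin n)} {a x : Fin n} (ha : σ a = a)
    (h : σ.SameCycle a x) : x = a := by
  obtain ⟨i, -, rfl⟩ := exists_pow_lt_period h
  exact pow_apply_eq_self ha i

lemma pow_mul_swap_of_avoid {σ : Equiv.Perm (Fin n)} {a b x : Fin n}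
    (hax : ∀ j : ℕ, (σ ^ j) x ≠ a) (hbx : ∀ j : ℕ, (σ ^ j) x ≠ b) (k : ℕ) :
    ((σ * Equiv.swap a b) ^ k) x = (σ ^ k) x := by
  induction k with
  | zero => simp
  | succ k ih =>
    rw [pow_succ', pow_succ', Equiv.Perm.mul_apply, Equiv.Perm.mul_apply, ih,
      Equiv.Perm.mul_apply, Equiv.swap_apply_of_ne_of_ne (hax k) (hbx k)]

lemma cycleList_congr {σ τ : Equiv.Perm (Fin n)} {m : Fin n}
    (h : ∀ k : ℕ, (σ ^ k) m = (τ ^ k) m) : cycleList σ m = cycleList τ m := by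
  have hmp : Function.minimalPeriod ⇑σ m = Function.minimalPeriod ⇑τ m := by
    refine le_antisymm ?_ ?_
    · refine Function.IsPeriodicPt.minimalPeriod_le (T_pos τ m) ?_
      show (σ ^ Function.minimalPeriod ⇑τ m) m = m
      rw [h]; exact pow_period τ m
    · refine Function.IsPeriodicPt.minimalPeriod_le (T_pos σ m) ?_
      show (τ ^ Function.minimalPeriod ⇑σ m) m = m
      rw [← h]; exact pow_period σ m
  rw [cycleList, cycleList, hmp]
  exact List.map_congr_left fun k _ => h k

lemma mem_minsSet_congr {σ τ : Equiv.Perm (Fin n)} {m : Fin n}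
    (h : ∀ k : ℕ, (σ ^ k) m = (τ ^ k) m) : m ∈ minsSet σ ↔ m ∈ minsSet τ := by
  simp only [mem_minsSet, h]

lemma sort_insert_max {s : Finset (Fin n)} {a : Fin n} (ha : a ∉ s) (h : ∀ b ∈ s, b ≤ a) :
    (insert a s).sort (· ≤ ·) = s.sort (· ≤ ·) ++ [a] := by
  refine (fun hp hs => List.Perm.eq_of_pairwise' (Finset.pairwise_sort _ _) hs hp) ?_ ?_
  · have p1 : List.Perm ((insert a s).sort (· ≤ ·)) ((insert a s).toList) :=
      Finset.sort_perm_toList _ _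
    have p2 : List.Perm ((insert a s).toList) (a :: s.toList) := Finset.toList_insert ha
    have p3 : List.Perm (a :: s.toList) (a :: s.sort (· ≤ ·)) :=
      List.Perm.cons a (Finset.sort_perm_toList _ _).symm
    have p4 : List.Perm (s.sort (· ≤ ·) ++ [a]) (a :: s.sort (· ≤ ·)) :=
      List.perm_append_singleton _ _
    exact ((p1.trans p2).trans p3).trans p4.symm
  · rw [List.pairwise_append]
    refine ⟨Finset.pairwise_sort _ _, List.pairwise_singleton _ _, ?_⟩
    intro x hx y hy
    rw [List.mem_singleton] at hy
    subst hy
    exact h x ((Finset.mem_sort _).1 hx)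

lemma even_card_of_involution {α : Type*} [DecidableEq α] (s : Finset α) (f : α → α)
    (hmem : ∀ x ∈ s, f x ∈ s) (hinv : ∀ x ∈ s, f (f x) = x) (hne : ∀ x ∈ s, f x ≠ x) :
    Even s.card := by
  classical
  revert hmem hinv hne
  induction s using Finset.strongInduction with
  | _ s ih =>
    intro hmem hinv hne
    rcases s.eq_empty_or_nonempty with rfl | ⟨x, hx⟩
    · simp
    · have hfx : f x ∈ s := hmem x hx
      have hxx : f x ≠ x := hne x hx
      set t := (s.erase x).erase (f x) with ht
      have htsub : t ⊆ s := (Finset.erase_subset _ _).trans (Finset.erase_subset _ _)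
      have hxt : x ∉ t := by simp [ht]
      have htss : t ⊂ s := Finset.ssubset_iff_of_subset htsub |>.2 ⟨x, hx, hxt⟩
      have hmemt : ∀ y ∈ t, f y ∈ t := by
        intro y hy
        have hy' := hy
        rw [ht, Finset.mem_erase, Finset.mem_erase] at hy'
        obtain ⟨hyfx, hyx, hys⟩ := hy'
        have h1 : f y ∈ s := hmem y hys
        have h2 : f y ≠ x := fun he => hyfx (by rw [← hinv y hys, he])
        have h3 : f y ≠ f x := fun he => hyx (by
          have := congrArg f he
          rwa [hinv y hys, hinv x hx] at this)
        rw [ht, Finset.mem_erase, Finset.mem_erase]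
        exact ⟨h3, h2, h1⟩
      have hcard : s.card = t.card + 2 := by
        have hfx' : f x ∈ s.erase x := Finset.mem_erase.2 ⟨hxx, hfx⟩
        rw [ht, Finset.card_erase_of_mem hfx', Finset.card_erase_of_mem hx]
        have h1 : 0 < s.card := Finset.card_pos.2 ⟨x, hx⟩
        have h2 : 0 < (s.erase x).card := Finset.card_pos.2 ⟨f x, hfx'⟩
        rw [Finset.card_erase_of_mem hx] at h2
        omega
      have hev : Even t.card :=
        ih t htss hmemt (fun y hy => hinv y (htsub hy)) (fun y hy => hne y (htsub hy))
      rw [hcard]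
      obtain ⟨c, hc⟩ := hev
      exact ⟨c + 1, by omega⟩

lemma pow_succ_apply (σ : Equiv.Perm (Fin n)) (x : Fin n) (k : ℕ) :
    (σ ^ (k + 1)) x = σ ((σ ^ k) x) := by
  rw [pow_succ']; rfl

lemma Fl_split (π : Equiv.Perm (Fin n)) {M : Fin n} (hM : M ∈ minsSet π)
    (hmax : ∀ m ∈ minsSet π, m ≤ M) (hT : 2 ≤ Function.minimalPeriod ⇑π M) :
    Fl (π * Equiv.swap ((π ^ (Function.minimalPeriod ⇑π M - 1)) M)
        ((π ^ (Function.minimalPeriod ⇑π M - 2)) M)) = Fl π := by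
  classical
  set T := Function.minimalPeriod ⇑π M with hTdef
  set a := (π ^ (T - 1)) M with hadef
  set b := (π ^ (T - 2)) M with hbdef
  set π' := π * Equiv.swap a b with hp'def
  have hPer : (π ^ T) M = M := pow_period π M
  have haM : a ≠ M := by
    intro he
    have h0 : (π ^ (T - 1)) M = (π ^ 0) M := by simp [← hadef, he]
    have : T - 1 = 0 := pow_apply_inj (σ := π) (m := M) (by omega) (by omega) h0
    omega
  have hMa : M < a := lt_of_le_of_ne (mem_minsSet.1 hM (T-1)) (Ne.symm haM)
  have hab : a ≠ b := by
    intro he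
    have h0 : (π ^ (T - 1)) M = (π ^ (T - 2)) M := by rw [← hadef, ← hbdef]; exact he
    have : T - 1 = T - 2 := pow_apply_inj (σ := π) (m := M) (by omega) (by omega) h0
    omega
  have hcycMa : π.SameCycle M a := sameCycle_of_pow hadef.symm
  have hcycMb : π.SameCycle M b := sameCycle_of_pow hbdef.symm
  have hπ'a : π' a = a := by
    rw [hp'def, Equiv.Perm.mul_apply, Equiv.swap_apply_left, hbdef, hadef,
      ← pow_succ_apply, show T - 2 + 1 = T - 1 by omega]
  have hπ'b : π' b = M := by
    rw [hp'def, Equiv.Perm.mul_apply, Equiv.swap_apply_right, hadef,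
      ← pow_succ_apply, show T - 1 + 1 = T by omega]
    exact hPer
  have hMk : ∀ k ≤ T - 2, (π' ^ k) M = (π ^ k) M := by
    intro k hk
    induction k with
    | zero => simp
    | succ k ih =>
      have h1 : (π ^ k) M ≠ a := by
        rw [hadef]; intro he
        have : k = T - 1 := pow_apply_inj (σ := π) (m := M) (by omega) (by omega) he
        omega
      have h2 : (π ^ k) M ≠ b := by
        rw [hbdef]; intro he
        have : k = T - 2 := pow_apply_inj (σ := π) (m := M) (by omega) (by omega) he
        omega
      rw [pow_succ_apply, pow_succ_apply, ih (by omega), hp'def, Equiv.Perm.mul_apply,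
        Equiv.swap_apply_of_ne_of_ne h1 h2]
  have hMper' : (π' ^ (T - 1)) M = M := by
    rw [show T - 1 = (T - 2) + 1 by omega, pow_succ_apply, hMk _ le_rfl, ← hbdef, hπ'b]
  have hmp' : Function.minimalPeriod ⇑π' M = T - 1 := by
    refine le_antisymm (Function.IsPeriodicPt.minimalPeriod_le (by omega) hMper') ?_
    by_contra hlt
    push_neg at hlt
    have ht0 : 0 < Function.minimalPeriod ⇑π' M := T_pos π' M
    have htper : (π' ^ Function.minimalPeriod ⇑π' M) M = M := pow_period π' M
    have h2 : (π ^ Function.minimalPeriod ⇑π' M) M = M := by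
      rw [← hMk _ (by omega)]; exact htper
    have : T ≤ Function.minimalPeriod ⇑π' M :=
      Function.IsPeriodicPt.minimalPeriod_le ht0 h2
    omega
  have hcl'M : cycleList π' M = (List.range (T - 1)).map (fun k => (π ^ k) M) := by
    rw [cycleList, hmp']
    exact List.map_congr_left fun k hk => hMk k (by have := List.mem_range.1 hk; omega)
  have hcl'a : cycleList π' a = [a] := by
    have h1 : Function.minimalPeriod ⇑π' a = 1 :=
      Function.minimalPeriod_eq_one_iff_isFixedPt.2 hπ'a
    rw [cycleList, h1, show List.range 1 = [0] from rfl, List.map_cons, List.map_nil, pow_zero]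
    rfl
  have htransfer : ∀ x, ¬ π.SameCycle M x → (∀ k : ℕ, (π' ^ k) x = (π ^ k) x) := by
    intro x hx
    have hxa : ∀ j : ℕ, (π ^ j) x ≠ a := avoid (fun hc => hx (hcycMa.trans hc.symm))
    have hxb : ∀ j : ℕ, (π ^ j) x ≠ b := avoid (fun hc => hx (hcycMb.trans hc.symm))
    exact fun k => pow_mul_swap_of_avoid hxa hxb k
  have hminsne : ∀ m ∈ minsSet π, m ≠ M → ¬ π.SameCycle M m := by
    intro m hm hne hc
    exact hne (minsSet_eq_of_sameCycle hM hm hc).symm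
  have hminsSet' : minsSet π' = insert a (minsSet π) := by
    ext x
    simp only [Finset.mem_insert]
    constructor
    · intro hx
      by_cases hxa : x = a
      · exact Or.inl hxa
      right
      by_cases hc : π.SameCycle M x
      · obtain ⟨j, hj, hjx⟩ := exists_pow_lt_period hc
        have hjne : j ≠ T - 1 := by
          intro he
          exact hxa (by rw [← hjx, he, hadef])
        have hx' : (π' ^ j) M = x := by rw [hMk j (by omega)]; exact hjx
        have h1 : M ≤ x := mem_minsSet_iff_cycle.1 hM x hc
        have h2 : x ≤ M := mem_minsSet_iff_cycle.1 hx M (sameCycle_of_pow hx').symm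
        have hxM : x = M := le_antisymm h2 h1
        rw [hxM]; exact hM
      · rw [mem_minsSet_congr (htransfer x hc)] at hx
        exact hx
    · intro hx
      rcases hx with rfl | hx
      · exact mem_minsSet.2 fun k => le_of_eq (pow_apply_eq_self hπ'a k).symm
      by_cases hxM : x = M
      · subst hxM
        refine mem_minsSet.2 fun k => ?_
        have h1 : (π' ^ k) x = (π' ^ (k % (T-1))) x := by
          conv_lhs => rw [← pow_mod π' x k]
          rw [hmp']
        have h2 : (π' ^ (k % (T-1))) x = (π ^ (k % (T-1))) x := by
          refine hMk _ ?_
          have : k % (T-1) < T-1 := Nat.mod_lt _ (by omega)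
          omega
        rw [h1, h2]
        exact mem_minsSet.1 hM _
      · have hc : ¬ π.SameCycle M x := by
          intro hc
          exact hxM (minsSet_eq_of_sameCycle hM hx hc).symm
        rw [mem_minsSet_congr (htransfer x hc)]
        exact hx
  have hanotin : a ∉ minsSet π := fun hin => absurd (hmax a hin) (not_le.2 hMa)
  have hsort' : (minsSet π').sort (· ≤ ·) = (minsSet π).sort (· ≤ ·) ++ [a] := by
    rw [hminsSet']
    exact sort_insert_max hanotin (fun m hm => le_of_lt (lt_of_le_of_lt (hmax m hm) hMa))
  have hsortS : (minsSet π).sort (· ≤ ·) = ((minsSet π).erase M).sort (· ≤ ·) ++ [M] := by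
    conv_lhs => rw [← Finset.insert_erase hM]
    exact sort_insert_max (Finset.notMem_erase _ _)
      (fun m hm => hmax m (Finset.mem_of_mem_erase hm))
  have hclcongr : List.map (cycleList π') (((minsSet π).erase M).sort (· ≤ ·))
      = List.map (cycleList π) (((minsSet π).erase M).sort (· ≤ ·)) := by
    refine List.map_congr_left fun m hm => ?_
    obtain ⟨hne, hmem⟩ := Finset.mem_erase.1 ((Finset.mem_sort _).1 hm)
    exact cycleList_congr (htransfer m (hminsne m hmem hne))
  rw [Fl, Fl, cycleMins_def, cycleMins_def, hsort', hsortS]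
  simp only [List.map_append, List.flatten_append, List.map_cons, List.map_nil,
    List.flatten_cons, List.flatten_nil, List.append_nil]
  rw [hclcongr, hcl'a, hcl'M, cycleList_eq_append π M, ← hadef, ← hTdef]
  simp [List.append_assoc]

lemma Fl_merge (π : Equiv.Perm (Fin n)) {M M' : Fin n} (hM : M ∈ minsSet π)
    (hmax : ∀ m ∈ minsSet π, m ≤ M) (hfix : π M = M) (hM' : M' ∈ minsSet π)
    (hMM' : M' ≠ M) (hmax' : ∀ m ∈ minsSet π, m ≠ M → m ≤ M') :
    Fl (π * Equiv.swap M ((π ^ (Function.minimalPeriod ⇑π M' - 1)) M')) = Fl π := by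
  classical
  set T' := Function.minimalPeriod ⇑π M' with hTdef
  set b := (π ^ (T' - 1)) M' with hbdef
  set π' := π * Equiv.swap M b with hp'def
  have hT'pos : 0 < T' := T_pos π M'
  have hPer : (π ^ T') M' = M' := pow_period π M'
  have hM'M : M' < M := lt_of_le_of_ne (hmax M' hM') hMM'
  have hnotc : ¬ π.SameCycle M' M := fun hc => hMM' (minsSet_eq_of_sameCycle hM' hM hc)
  have havoidM : ∀ j : ℕ, (π ^ j) M' ≠ M := avoid hnotc
  have hbM : b ≠ M := by rw [hbdef]; exact havoidM _
  have hπ'b : π' b = M := by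
    rw [hp'def, Equiv.Perm.mul_apply, Equiv.swap_apply_right]
    exact hfix
  have hπ'M : π' M = M' := by
    rw [hp'def, Equiv.Perm.mul_apply, Equiv.swap_apply_left, hbdef,
      ← pow_succ_apply, show T' - 1 + 1 = T' by omega]
    exact hPer
  have hM'k : ∀ k ≤ T' - 1, (π' ^ k) M' = (π ^ k) M' := by
    intro k hk
    induction k with
    | zero => simp
    | succ k ih =>
      have h1 : (π ^ k) M' ≠ M := havoidM k
      have h2 : (π ^ k) M' ≠ b := by
        rw [hbdef]; intro he
        have : k = T' - 1 := pow_apply_inj (σ := π) (m := M') (by omega) (by omega) he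
        omega
      rw [pow_succ_apply, pow_succ_apply, ih (by omega), hp'def, Equiv.Perm.mul_apply,
        Equiv.swap_apply_of_ne_of_ne h1 h2]
  have hstep : (π' ^ T') M' = M := by
    rw [show T' = (T' - 1) + 1 by omega, pow_succ_apply, hM'k _ le_rfl, ← hbdef, hπ'b]
  have hstep2 : (π' ^ (T' + 1)) M' = M' := by
    rw [pow_succ_apply, hstep, hπ'M]
  have hmp' : Function.minimalPeriod ⇑π' M' = T' + 1 := by
    refine le_antisymm (Function.IsPeriodicPt.minimalPeriod_le (by omega) hstep2) ?_
    by_contra hlt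
    push_neg at hlt
    have ht0 : 0 < Function.minimalPeriod ⇑π' M' := T_pos π' M'
    have htper : (π' ^ Function.minimalPeriod ⇑π' M') M' = M' := pow_period π' M'
    by_cases hc : Function.minimalPeriod ⇑π' M' = T'
    · rw [hc, hstep] at htper
      exact hMM' htper.symm
    · have h2 : (π ^ Function.minimalPeriod ⇑π' M') M' = M' := by
        rw [← hM'k _ (by omega)]; exact htper
      have : T' ≤ Function.minimalPeriod ⇑π' M' :=
        Function.IsPeriodicPt.minimalPeriod_le ht0 h2
      omega
  have hcl'M' : cycleList π' M' = cycleList π M' ++ [M] := by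
    rw [cycleList, hmp', List.range_succ, List.map_append, cycleList, ← hTdef]
    congr 1
    · exact List.map_congr_left fun k hk =>
        hM'k k (by have := List.mem_range.1 hk; omega)
    · rw [List.map_singleton, hstep]
  have hTM : Function.minimalPeriod ⇑π M = 1 :=
    Function.minimalPeriod_eq_one_iff_isFixedPt.2 hfix
  have hclM : cycleList π M = [M] := by
    rw [cycleList, hTM, show List.range 1 = [0] from rfl, List.map_cons, List.map_nil, pow_zero]
    rfl
  have htransfer : ∀ x, ¬ π.SameCycle M' x → x ≠ M → (∀ k : ℕ, (π' ^ k) x = (π ^ k) x) := by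
    intro x hx hxM
    have hxa : ∀ j : ℕ, (π ^ j) x ≠ M := by
      refine avoid ?_
      intro hc
      exact hxM (sameCycle_fixed hfix hc.symm)
    have hxb : ∀ j : ℕ, (π ^ j) x ≠ b := by
      refine avoid ?_
      intro hc
      exact hx ((sameCycle_of_pow hbdef.symm).trans hc.symm)
    exact fun k => pow_mul_swap_of_avoid hxa hxb k
  have hmins' : minsSet π' = (minsSet π).erase M := by
    ext x
    simp only [Finset.mem_erase]
    constructor
    · intro hx
      have hxM : x ≠ M := by
        intro he
        subst he
        have h1 := mem_minsSet.1 hx 1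
        rw [pow_one, hπ'M] at h1
        exact absurd h1 (not_le.2 hM'M)
      refine ⟨hxM, ?_⟩
      by_cases hc : π.SameCycle M' x
      · obtain ⟨j, hj, hjx⟩ := exists_pow_lt_period hc
        have hx' : (π' ^ j) M' = x := by rw [hM'k j (by omega)]; exact hjx
        have h1 : M' ≤ x := mem_minsSet_iff_cycle.1 hM' x hc
        have h2 : x ≤ M' := mem_minsSet_iff_cycle.1 hx M' (sameCycle_of_pow hx').symm
        have hxM' : x = M' := le_antisymm h2 h1
        rw [hxM']; exact hM'
      · rw [mem_minsSet_congr (htransfer x hc hxM)] at hx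
        exact hx
    · rintro ⟨hxM, hx⟩
      by_cases hxM' : x = M'
      · subst hxM'
        refine mem_minsSet.2 fun k => ?_
        have h1 : (π' ^ k) x = (π' ^ (k % (T' + 1))) x := by
          conv_lhs => rw [← pow_mod π' x k]
          rw [hmp']
        by_cases hc : k % (T' + 1) = T'
        · rw [h1, hc, hstep]
          exact le_of_lt hM'M
        · have hk2 : k % (T' + 1) ≤ T' - 1 := by
            have : k % (T' + 1) < T' + 1 := Nat.mod_lt _ (by omega)
            omega
          rw [h1, hM'k _ hk2]
          exact mem_minsSet.1 hx _
      · have hc : ¬ π.SameCycle M' x := by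
          intro hc
          exact hxM' (minsSet_eq_of_sameCycle hM' hx hc).symm
        rw [mem_minsSet_congr (htransfer x hc hxM)]
        exact hx
  have hsortS : (minsSet π).sort (· ≤ ·) = ((minsSet π).erase M).sort (· ≤ ·) ++ [M] := by
    conv_lhs => rw [← Finset.insert_erase hM]
    exact sort_insert_max (Finset.notMem_erase _ _)
      (fun m hm => hmax m (Finset.mem_of_mem_erase hm))
  have hM'E : M' ∈ (minsSet π).erase M := Finset.mem_erase.2 ⟨hMM', hM'⟩
  have hsortE : ((minsSet π).erase M).sort (· ≤ ·)
      = (((minsSet π).erase M).erase M').sort (· ≤ ·) ++ [M'] := by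
    conv_lhs => rw [← Finset.insert_erase hM'E]
    refine sort_insert_max (Finset.notMem_erase _ _) ?_
    intro m hm
    have h1 := Finset.mem_erase.1 hm
    have h2 := Finset.mem_erase.1 h1.2
    exact hmax' m h2.2 h2.1
  have hclcongr : List.map (cycleList π') ((((minsSet π).erase M).erase M').sort (· ≤ ·))
      = List.map (cycleList π) ((((minsSet π).erase M).erase M').sort (· ≤ ·)) := by
    refine List.map_congr_left fun m hm => ?_
    have h1 := Finset.mem_erase.1 ((Finset.mem_sort _).1 hm)
    have h2 := Finset.mem_erase.1 h1.2
    have hc : ¬ π.SameCycle M' m := by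
      intro hc
      exact h1.1 (minsSet_eq_of_sameCycle hM' h2.2 hc).symm
    exact cycleList_congr (htransfer m hc h2.1)
  rw [Fl, Fl, cycleMins_def, cycleMins_def, hmins', hsortS, hsortE]
  simp only [List.map_append, List.flatten_append, List.map_cons, List.map_nil,
    List.flatten_cons, List.flatten_nil, List.append_nil]
  rw [hclcongr, hcl'M', hclM]
  simp [List.append_assoc]

lemma getD_last_two {l w : List (Fin n)} {b a d : Fin n} (h : l = w ++ [b, a])
    (hlen : l.length = n) : l.getD (n - 1) d = a ∧ l.getD (n - 2) d = b := by
  subst h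
  have hw : w.length + 2 = n := by simpa using hlen
  constructor
  · rw [show n - 1 = w.length + 1 by omega,
      List.getD_append_right _ _ _ _ (by omega),
      show w.length + 1 - w.length = 1 by omega]
    rfl
  · rw [show n - 2 = w.length by omega,
      List.getD_append_right _ _ _ _ le_rfl, Nat.sub_self]
    rfl

theorem Fl_surgery (hn : 2 ≤ n) (π : Equiv.Perm (Fin n)) (d : Fin n) :
    Fl (π * Equiv.swap ((Fl π).getD (n - 1) d) ((Fl π).getD (n - 2) d)) = Fl π := by
  classical
  obtain ⟨m0, hm0, -⟩ := exists_min π d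
  have hSne : (minsSet π).Nonempty := ⟨m0, hm0⟩
  set M := (minsSet π).max' hSne with hMdef
  have hM : M ∈ minsSet π := Finset.max'_mem _ _
  have hmax : ∀ m ∈ minsSet π, m ≤ M := fun m hm => Finset.le_max' _ m hm
  have hsortS : (minsSet π).sort (· ≤ ·) = ((minsSet π).erase M).sort (· ≤ ·) ++ [M] := by
    conv_lhs => rw [← Finset.insert_erase hM]
    exact sort_insert_max (Finset.notMem_erase _ _)
      (fun m hm => hmax m (Finset.mem_of_mem_erase hm))
  have hFlπ : Fl π = (List.map (cycleList π)
      (((minsSet π).erase M).sort (· ≤ ·))).flatten ++ cycleList π M := by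
    rw [Fl, cycleMins_def, hsortS]
    simp only [List.map_append, List.flatten_append, List.map_cons, List.map_nil,
      List.flatten_cons, List.flatten_nil, List.append_nil]
  set T := Function.minimalPeriod ⇑π M with hTdef
  have hTpos : 0 < T := T_pos π M
  by_cases hT : 2 ≤ T
  · -- split case
    have hdec : Fl π = ((List.map (cycleList π)
        (((minsSet π).erase M).sort (· ≤ ·))).flatten
          ++ (List.range (T - 2)).map (fun k => (π ^ k) M))
        ++ [(π ^ (T - 2)) M, (π ^ (T - 1)) M] := by
      rw [hFlπ, cycleList_eq_append π M, ← hTdef,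
        show T - 1 = (T - 2) + 1 by omega, List.range_succ, List.map_append]
      simp [List.append_assoc, show T - 2 + 1 = T - 1 by omega]
    obtain ⟨h1, h2⟩ := getD_last_two (d := d) hdec (Fl_length π)
    rw [h1, h2]
    exact Fl_split π hM hmax hT
  · -- merge case
    have hT1 : T = 1 := by omega
    have hfix : π M = M := Function.minimalPeriod_eq_one_iff_isFixedPt.1 hT1
    have hclM : cycleList π M = [M] := by
      rw [cycleList, ← hTdef, hT1, show List.range 1 = [0] from rfl,
        List.map_cons, List.map_nil, pow_zero]
      rfl
    have hEne : ((minsSet π).erase M).Nonempty := by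
      by_contra h
      rw [Finset.not_nonempty_iff_eq_empty] at h
      have hsing : minsSet π = {M} := by
        refine Finset.eq_singleton_iff_unique_mem.2 ⟨hM, ?_⟩
        intro x hx
        by_contra hne
        have hmem : x ∈ (minsSet π).erase M := Finset.mem_erase.2 ⟨hne, hx⟩
        rw [h] at hmem
        exact absurd hmem (Finset.notMem_empty x)
      have hlen := Fl_length π
      rw [Fl, cycleMins_def, hsing, Finset.sort_singleton, List.map_cons, List.map_nil,
        List.flatten_cons, List.flatten_nil, List.append_nil, hclM] at hlen
      simp at hlen
      omega
    set M' := ((minsSet π).erase M).max' hEne with hM'def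
    have hM'E : M' ∈ (minsSet π).erase M := Finset.max'_mem _ _
    have hM' : M' ∈ minsSet π := Finset.mem_of_mem_erase hM'E
    have hMM' : M' ≠ M := (Finset.mem_erase.1 hM'E).1
    have hmax' : ∀ m ∈ minsSet π, m ≠ M → m ≤ M' := fun m hm hne =>
      Finset.le_max' _ m (Finset.mem_erase.2 ⟨hne, hm⟩)
    have hsortE : ((minsSet π).erase M).sort (· ≤ ·)
        = (((minsSet π).erase M).erase M').sort (· ≤ ·) ++ [M'] := by
      conv_lhs => rw [← Finset.insert_erase hM'E]
      refine sort_insert_max (Finset.notMem_erase _ _) ?_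
      intro m hm
      have h1 := Finset.mem_erase.1 hm
      have h2 := Finset.mem_erase.1 h1.2
      exact hmax' m h2.2 h2.1
    set T' := Function.minimalPeriod ⇑π M' with hT'def
    have hT'pos : 0 < T' := T_pos π M'
    have hdec : Fl π = ((List.map (cycleList π)
        ((((minsSet π).erase M).erase M').sort (· ≤ ·))).flatten
          ++ (List.range (T' - 1)).map (fun k => (π ^ k) M'))
        ++ [(π ^ (T' - 1)) M', M] := by
      rw [hFlπ, hsortE, hclM]
      simp only [List.map_append, List.flatten_append, List.map_cons, List.map_nil,
        List.flatten_cons, List.flatten_nil, List.append_nil]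
      rw [cycleList_eq_append π M', ← hT'def]
      simp [List.append_assoc]
    obtain ⟨h1, h2⟩ := getD_last_two (d := d) hdec (Fl_length π)
    rw [h1, h2]
    exact Fl_merge π hM hmax hfix hM' hMM' hmax'

end FlatAux

/-- For all `n ≥ 2`, `r ≥ 1` and `k ≥ 2`, the number `g_{n,r}(1k)` is even. -/
theorem gCount_even (n r k : ℕ) (hn : 2 ≤ n) (hr : 1 ≤ r) (hk : 2 ≤ k) :
    Even (gCount n r [1, k]) := by
  classical
  have hd : 0 < n := by omega
  set d : Fin n := ⟨0, hd⟩ with hddef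
  set f : Equiv.Perm (Fin n) → Equiv.Perm (Fin n) :=
    fun π => π * Equiv.swap ((FlatAux.Fl π).getD (n - 1) d) ((FlatAux.Fl π).getD (n - 2) d)
    with hfdef
  have hFl : ∀ π, FlatAux.Fl (f π) = FlatAux.Fl π := fun π => FlatAux.Fl_surgery hn π d
  have hflat : ∀ π, flattenPerm (f π) = flattenPerm π := fun π => by
    rw [FlatAux.flattenPerm_eq, FlatAux.flattenPerm_eq, hFl]
  have hab : ∀ π : Equiv.Perm (Fin n),
      (FlatAux.Fl π).getD (n - 1) d ≠ (FlatAux.Fl π).getD (n - 2) d := by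
    intro π he
    have hlen := FlatAux.Fl_length π
    have h1 : n - 1 < (FlatAux.Fl π).length := by omega
    have h2 : n - 2 < (FlatAux.Fl π).length := by omega
    rw [List.getD_eq_getElem _ _ h1, List.getD_eq_getElem _ _ h2] at he
    have h3 := (List.Nodup.get_inj_iff (FlatAux.Fl_nodup π) (i := ⟨n - 1, h1⟩)
      (j := ⟨n - 2, h2⟩)).1 he
    have h4 : n - 1 = n - 2 := congrArg Fin.val h3
    omega
  unfold gCount
  refine FlatAux.even_card_of_involution _ f ?_ ?_ ?_
  · intro π hπ
    simp only [Finset.mem_filter, Finset.mem_univ, true_and] at hπ ⊢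
    rw [hflat π]
    exact hπ
  · intro π hπ
    have hFl' : FlatAux.Fl (π * Equiv.swap ((FlatAux.Fl π).getD (n - 1) d)
        ((FlatAux.Fl π).getD (n - 2) d)) = FlatAux.Fl π := by
      have := hFl π
      rw [hfdef] at this
      exact this
    simp only [hfdef]
    rw [hFl', mul_assoc, Equiv.swap_mul_self, mul_one]
  · intro π hπ he
    rw [hfdef] at he
    have h2 : Equiv.swap ((FlatAux.Fl π).getD (n - 1) d) ((FlatAux.Fl π).getD (n - 2) d)
        = 1 := by
      refine mul_left_cancel (a := π) ?_
      rw [mul_one]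
      exact he
    have h4 := congrArg (fun σ : Equiv.Perm (Fin n) =>
      σ ((FlatAux.Fl π).getD (n - 1) d)) h2
    simp only [Equiv.swap_apply_left, Equiv.Perm.coe_one, id_eq] at h4
    exact hab π h4.symm
end
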